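/- (Comparison principle on ℕ with boundary condition.) Let v, w : [0,∞) → ℝ^ℕ be such that for each j ∈ ℕ the maps t ↦ v_j(t) and t ↦ w_j(t) are continuously differentiable, and suppose there is a constant M > 0 with |v_j(t)| + |w_j(t)| ≤ M for all t ≥ 0 and j ∈ ℕ. Assume that for all t > 0 and all j ≥ 1, v_j'(t) ≤ 𝒩(v_{j−1}(t), v_j(t), v_{j+1}(t)) and w_j'(t) ≥ 𝒩(w_{j−1}(t), w_j(t), w_{j+1}(t)), and that v_0(t) ≤ w_0(t) for all t ≥ 0. If v_j(0) ≤ w_j(0) for all j ≥ 1, then v_j(t) ≤ w_j(t) for all t > 0 and all j ≥ 1. -/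

import Mathlib

/-- The sigmoid nonlinearity `S(x) = 1/(1 + exp(-μ(x - θ)))`. -/
noncomputable def sigmoid (μ θ x : ℝ) : ℝ := 1 / (1 + Real.exp (-μ * (x - θ)))

open Topology Filter Set

lemma one_add_exp_pos (y : ℝ) : 0 < 1 + Real.exp y := by positivity

lemma sigmoid_pos (μ θ x : ℝ) : 0 < sigmoid μ θ x := by
  unfold sigmoid; positivity

lemma sigmoid_lt_one (μ θ x : ℝ) : sigmoid μ θ x < 1 := by
  unfold sigmoid
  rw [div_lt_one (one_add_exp_pos _)]
  linarith [Real.exp_pos (-μ * (x - θ))]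

lemma hasDerivAt_sigmoid (μ θ x : ℝ) :
    HasDerivAt (sigmoid μ θ) (μ * sigmoid μ θ x * (1 - sigmoid μ θ x)) x := by
  have hinner : HasDerivAt (fun y : ℝ => -μ * (y - θ)) (-μ) x := by
    simpa using ((hasDerivAt_id x).sub_const θ).const_mul (-μ)
  have hexp : HasDerivAt (fun y : ℝ => Real.exp (-μ * (y - θ)))
      (Real.exp (-μ * (x - θ)) * (-μ)) x := hinner.exp
  have hden : HasDerivAt (fun y : ℝ => 1 + Real.exp (-μ * (y - θ)))
      (Real.exp (-μ * (x - θ)) * (-μ)) x := hexp.const_add 1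
  have hne : (1 + Real.exp (-μ * (x - θ))) ≠ 0 := (one_add_exp_pos _).ne'
  have := (hasDerivAt_const x (1:ℝ)).div hden hne
  refine this.congr_deriv ?_
  unfold sigmoid
  field_simp
  ring

lemma deriv_sigmoid (μ θ x : ℝ) :
    deriv (sigmoid μ θ) x = μ * sigmoid μ θ x * (1 - sigmoid μ θ x) :=
  (hasDerivAt_sigmoid μ θ x).deriv

lemma sigmoid_mono {μ : ℝ} (hμ : 0 ≤ μ) (θ : ℝ) {x y : ℝ} (hxy : x ≤ y) :
    sigmoid μ θ x ≤ sigmoid μ θ y := by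
  unfold sigmoid
  apply div_le_div_of_nonneg_left one_pos.le (one_add_exp_pos _)
  have : -μ * (y - θ) ≤ -μ * (x - θ) := by nlinarith
  linarith [Real.exp_le_exp.2 this]

lemma deriv_sigmoid_nonneg {μ : ℝ} (hμ : 0 ≤ μ) (θ x : ℝ) : 0 ≤ deriv (sigmoid μ θ) x := by
  rw [deriv_sigmoid]
  have h1 := sigmoid_pos μ θ x
  have h2 := sigmoid_lt_one μ θ x
  have : (0:ℝ) ≤ 1 - sigmoid μ θ x := by linarith
  positivity

lemma deriv_sigmoid_le {μ : ℝ} (hμ : 0 ≤ μ) (θ x : ℝ) : deriv (sigmoid μ θ) x ≤ μ := by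
  rw [deriv_sigmoid]
  have h1 := sigmoid_pos μ θ x
  have h2 := sigmoid_lt_one μ θ x
  nlinarith [mul_nonneg (mul_nonneg hμ h1.le) (by linarith : (0:ℝ) ≤ 1 - sigmoid μ θ x),
    mul_nonneg hμ (mul_nonneg h1.le h1.le)]

lemma sigmoid_lipschitz {μ : ℝ} (hμ : 0 ≤ μ) (θ x y : ℝ) :
    |sigmoid μ θ y - sigmoid μ θ x| ≤ μ * |y - x| := by
  have := Convex.norm_image_sub_le_of_norm_deriv_le
    (f := sigmoid μ θ) (s := Set.univ) (C := μ)
    (fun z _ => (hasDerivAt_sigmoid μ θ z).differentiableAt)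
    (fun z _ => by
      rw [Real.norm_eq_abs, abs_of_nonneg (deriv_sigmoid_nonneg hμ θ z)]
      exact deriv_sigmoid_le hμ θ z)
    convex_univ (Set.mem_univ x) (Set.mem_univ y)
  simpa [Real.norm_eq_abs] using this

lemma hasDerivAt_deriv_sigmoid (μ θ x : ℝ) :
    HasDerivAt (deriv (sigmoid μ θ))
      (μ * (μ * sigmoid μ θ x * (1 - sigmoid μ θ x)) * (1 - 2 * sigmoid μ θ x)) x := by
  have hfun : deriv (sigmoid μ θ) = fun y => μ * (sigmoid μ θ y * (1 - sigmoid μ θ y)) := by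
    funext y; rw [deriv_sigmoid]; ring
  rw [hfun]
  have hS := hasDerivAt_sigmoid μ θ x
  have h2 := hS.mul ((hasDerivAt_const x (1:ℝ)).sub hS)
  have := h2.const_mul μ
  refine this.congr_deriv ?_
  simp only [Pi.sub_apply]
  ring

lemma deriv_sigmoid_lipschitz {μ : ℝ} (hμ : 0 ≤ μ) (θ x y : ℝ) :
    |deriv (sigmoid μ θ) y - deriv (sigmoid μ θ) x| ≤ μ ^ 2 * |y - x| := by
  have := Convex.norm_image_sub_le_of_norm_deriv_le
    (f := deriv (sigmoid μ θ)) (s := Set.univ) (C := μ ^ 2)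
    (fun z _ => (hasDerivAt_deriv_sigmoid μ θ z).differentiableAt)
    (fun z _ => by
      rw [(hasDerivAt_deriv_sigmoid μ θ z).deriv, Real.norm_eq_abs]
      have h1 := sigmoid_pos μ θ z
      have h2 := sigmoid_lt_one μ θ z
      have hb : |1 - 2 * sigmoid μ θ z| ≤ 1 := by rw [abs_le]; constructor <;> nlinarith
      have hb2 : |μ * sigmoid μ θ z * (1 - sigmoid μ θ z)| ≤ μ := by
        have h3 : 0 ≤ μ * sigmoid μ θ z * (1 - sigmoid μ θ z) :=
          mul_nonneg (mul_nonneg hμ h1.le) (by linarith)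
        rw [abs_of_nonneg h3]
        nlinarith [mul_nonneg hμ (mul_nonneg h1.le h1.le)]
      calc |μ * (μ * sigmoid μ θ z * (1 - sigmoid μ θ z)) * (1 - 2 * sigmoid μ θ z)|
          = |μ| * |μ * sigmoid μ θ z * (1 - sigmoid μ θ z)| * |1 - 2 * sigmoid μ θ z| := by
            rw [abs_mul, abs_mul]
        _ ≤ μ * μ * 1 := by
            apply mul_le_mul _ hb (abs_nonneg _) (by positivity)
            exact mul_le_mul (le_of_eq (abs_of_nonneg hμ)) hb2 (abs_nonneg _) hμ
        _ = μ ^ 2 := by ring)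
    convex_univ (Set.mem_univ x) (Set.mem_univ y)
  simpa [Real.norm_eq_abs] using this

/-- The nonlinearity
`𝒩(u,v,w) = (1−p−q)·(S(u) − v) + p·S'(v)·(u − S(v)) + q·(S(w) − v)`. -/
noncomputable def Nfun (μ θ p q u v w : ℝ) : ℝ :=
  (1 - p - q) * (sigmoid μ θ u - v)
    + p * deriv (sigmoid μ θ) v * (u - sigmoid μ θ v)
    + q * (sigmoid μ θ w - v)

lemma Nfun_diff_le {μ θ p q : ℝ} (hμ : 0 < μ) (hp : 0 ≤ p) (hq0 : 0 ≤ q) (hpq : p + q ≤ 1)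
    {M u v w u' v' w' A B C : ℝ}
    (hu' : |u'| ≤ M) (hA0 : 0 ≤ A) (hB0 : 0 ≤ B) (hC0 : 0 ≤ C)
    (hA : u - u' ≤ A) (hB : |v - v'| ≤ B) (hC : w - w' ≤ C) :
    Nfun μ θ p q u v w - Nfun μ θ p q u' v' w' ≤
      2 * μ * A + (2 + μ ^ 2 * (M + 2)) * B + μ * C := by
  have hM0 : 0 ≤ M := le_trans (abs_nonneg _) hu'
  set S := sigmoid μ θ with hSdef
  set Sp := deriv (sigmoid μ θ) with hSpdef
  -- first bracket
  have h1 : S u - S u' ≤ μ * A := by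
    have hm : S u ≤ S (u' + A) := sigmoid_mono hμ.le θ (by linarith)
    have hl := sigmoid_lipschitz hμ.le θ u' (u' + A)
    rw [show u' + A - u' = A by ring, abs_of_nonneg hA0] at hl
    have := (abs_le.1 hl).2
    linarith
  have h3 : S w - S w' ≤ μ * C := by
    have hm : S w ≤ S (w' + C) := sigmoid_mono hμ.le θ (by linarith)
    have hl := sigmoid_lipschitz hμ.le θ w' (w' + C)
    rw [show w' + C - w' = C by ring, abs_of_nonneg hC0] at hl
    have := (abs_le.1 hl).2
    linarith
  have hBv := abs_le.1 hB
  -- middle term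
  have hSpv0 : 0 ≤ Sp v := deriv_sigmoid_nonneg hμ.le θ v
  have hSpvμ : Sp v ≤ μ := deriv_sigmoid_le hμ.le θ v
  have hSpv'0 : 0 ≤ Sp v' := deriv_sigmoid_nonneg hμ.le θ v'
  have hSpv'μ : Sp v' ≤ μ := deriv_sigmoid_le hμ.le θ v'
  have hta : Sp v * (u - u') ≤ μ * A := by nlinarith
  have htb : (Sp v - Sp v') * (u' - S v) ≤ μ ^ 2 * (M + 1) * B := by
    have hd : |Sp v - Sp v'| ≤ μ ^ 2 * B := by
      have := deriv_sigmoid_lipschitz hμ.le θ v' v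
      have h2 : μ ^ 2 * |v - v'| ≤ μ ^ 2 * B := by nlinarith
      calc |Sp v - Sp v'| ≤ μ ^ 2 * |v - v'| := this
        _ ≤ μ ^ 2 * B := h2
    have hu2 : |u' - S v| ≤ M + 1 := by
      have hp1 := sigmoid_pos μ θ v
      have hp2 := sigmoid_lt_one μ θ v
      have := abs_le.1 hu'
      rw [abs_le]; constructor <;> [skip; skip] <;> simp only [hSdef] at * <;> nlinarith
    calc (Sp v - Sp v') * (u' - S v) ≤ |(Sp v - Sp v') * (u' - S v)| := le_abs_self _
      _ = |Sp v - Sp v'| * |u' - S v| := abs_mul _ _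
      _ ≤ (μ ^ 2 * B) * (M + 1) :=
          mul_le_mul hd hu2 (abs_nonneg _) (by positivity)
      _ = μ ^ 2 * (M + 1) * B := by ring
  have habs : |S v' - S v| ≤ μ * B := by
    have hl := sigmoid_lipschitz hμ.le θ v v'
    have h2 : |v' - v| ≤ B := by rw [abs_sub_comm]; exact hB
    calc |S v' - S v| ≤ μ * |v' - v| := hl
      _ ≤ μ * B := mul_le_mul_of_nonneg_left h2 hμ.le
  have htc : Sp v' * (S v' - S v) ≤ μ ^ 2 * B := by
    have h2 := (abs_le.1 habs).2
    calc Sp v' * (S v' - S v) ≤ Sp v' * (μ * B) := mul_le_mul_of_nonneg_left h2 hSpv'0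
      _ ≤ μ * (μ * B) := mul_le_mul_of_nonneg_right hSpv'μ (by positivity)
      _ = μ ^ 2 * B := by ring
  have hmid : Sp v * (u - S v) - Sp v' * (u' - S v') ≤
      μ * A + (μ ^ 2 * (M + 1) + μ ^ 2) * B := by
    have hid : Sp v * (u - S v) - Sp v' * (u' - S v') =
        Sp v * (u - u') + (Sp v - Sp v') * (u' - S v) + Sp v' * (S v' - S v) := by ring
    rw [hid]; linarith
  -- assemble
  have hexp : Nfun μ θ p q u v w - Nfun μ θ p q u' v' w' =
      (1 - p - q) * ((S u - S u') - (v - v'))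
        + p * (Sp v * (u - S v) - Sp v' * (u' - S v'))
        + q * ((S w - S w') - (v - v')) := by
    simp only [Nfun, hSdef, hSpdef]; ring
  rw [hexp]
  have hc1 : 0 ≤ 1 - p - q := by linarith
  have hY1 : (S u - S u') - (v - v') ≤ μ * A + B := by linarith
  have hY2 : Sp v * (u - S v) - Sp v' * (u' - S v') ≤ μ * A + (μ ^ 2 * (M + 1) + μ ^ 2) * B :=
    hmid
  have hY3 : (S w - S w') - (v - v') ≤ μ * C + B := by linarith
  have hY1nn : (0:ℝ) ≤ μ * A + B := by positivity
  have hY2nn : (0:ℝ) ≤ μ * A + (μ ^ 2 * (M + 1) + μ ^ 2) * B := by positivity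
  have hY3nn : (0:ℝ) ≤ μ * C + B := by positivity
  have hP1 : (1 - p - q) * ((S u - S u') - (v - v')) ≤ μ * A + B :=
    calc (1 - p - q) * ((S u - S u') - (v - v'))
        ≤ (1 - p - q) * (μ * A + B) := mul_le_mul_of_nonneg_left hY1 hc1
      _ ≤ 1 * (μ * A + B) := mul_le_mul_of_nonneg_right (by linarith) hY1nn
      _ = μ * A + B := one_mul _
  have hP2 : p * (Sp v * (u - S v) - Sp v' * (u' - S v')) ≤
      μ * A + (μ ^ 2 * (M + 1) + μ ^ 2) * B :=
    calc p * (Sp v * (u - S v) - Sp v' * (u' - S v'))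
        ≤ p * (μ * A + (μ ^ 2 * (M + 1) + μ ^ 2) * B) := mul_le_mul_of_nonneg_left hY2 hp
      _ ≤ 1 * (μ * A + (μ ^ 2 * (M + 1) + μ ^ 2) * B) :=
          mul_le_mul_of_nonneg_right (by linarith) hY2nn
      _ = μ * A + (μ ^ 2 * (M + 1) + μ ^ 2) * B := one_mul _
  have hP3 : q * ((S w - S w') - (v - v')) ≤ μ * C + B :=
    calc q * ((S w - S w') - (v - v'))
        ≤ q * (μ * C + B) := mul_le_mul_of_nonneg_left hY3 hq0
      _ ≤ 1 * (μ * C + B) := mul_le_mul_of_nonneg_right (by linarith) hY3nn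
      _ = μ * C + B := one_mul _
  have hMB : μ ^ 2 * (M + 1) * B + μ ^ 2 * B = μ ^ 2 * (M + 2) * B := by ring
  linarith

lemma deriv_nonneg_of_max {h : ℝ → ℝ} {d t₀ : ℝ} (ht₀ : 0 < t₀)
    (hd : HasDerivWithinAt h d (Set.Icc 0 t₀) t₀)
    (hle : ∀ t ∈ Set.Icc (0:ℝ) t₀, h t ≤ h t₀) : 0 ≤ d := by
  rw [hasDerivWithinAt_iff_tendsto_slope] at hd
  have hset : Set.Icc (0:ℝ) t₀ \ {t₀} = Set.Ico 0 t₀ := by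
    ext x
    simp only [Set.mem_diff, Set.mem_Icc, Set.mem_singleton_iff, Set.mem_Ico]
    constructor
    · rintro ⟨⟨h1, h2⟩, h3⟩; exact ⟨h1, lt_of_le_of_ne h2 h3⟩
    · rintro ⟨h1, h2⟩; exact ⟨⟨h1, h2.le⟩, h2.ne⟩
  rw [hset] at hd
  have : (𝓝[Set.Ico (0:ℝ) t₀] t₀).NeBot := right_nhdsWithin_Ico_neBot ht₀
  refine ge_of_tendsto hd ?_
  filter_upwards [self_mem_nhdsWithin] with t ht
  have h1 : h t - h t₀ ≤ 0 := by
    have := hle t ⟨ht.1, ht.2.le⟩; linarith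
  have h2 : t - t₀ < 0 := by linarith [ht.2]
  rw [slope_def_field]
  exact div_nonneg_of_nonpos h1 h2.le

set_option maxHeartbeats 1000000 in
/-- Comparison principle on `ℕ` with boundary condition. If
`v, w : [0,∞) → ℝ^ℕ` are componentwise `C¹` and uniformly bounded, `v` is a subsolution
and `w` a supersolution of the lattice equation for `j ≥ 1`, `v_0(t) ≤ w_0(t)` for all
`t ≥ 0`, and `v_j(0) ≤ w_j(0)` for all `j ≥ 1`, then `v_j(t) ≤ w_j(t)` for all `t > 0`
and `j ≥ 1`. -/
theorem stmt_17 (μ θ p q : ℝ) (hμ : 0 < μ) (hθ : 0 ≤ θ)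
    (hp : 0 ≤ p) (hq0 : 0 ≤ q) (hq1 : q ≤ 1) (hpq : p + q ≤ 1)
    (v w v' w' : ℝ → ℕ → ℝ)
    -- componentwise continuously differentiable on [0,∞)
    (hv : ∀ j : ℕ, ∀ t ∈ Set.Ici (0 : ℝ),
      HasDerivWithinAt (fun s => v s j) (v' t j) (Set.Ici (0 : ℝ)) t)
    (hw : ∀ j : ℕ, ∀ t ∈ Set.Ici (0 : ℝ),
      HasDerivWithinAt (fun s => w s j) (w' t j) (Set.Ici (0 : ℝ)) t)
    (hv' : ∀ j : ℕ, ContinuousOn (fun t => v' t j) (Set.Ici (0 : ℝ)))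
    (hw' : ∀ j : ℕ, ContinuousOn (fun t => w' t j) (Set.Ici (0 : ℝ)))
    -- uniform bound
    (M : ℝ) (hM : 0 < M)
    (hbound : ∀ t ∈ Set.Ici (0 : ℝ), ∀ j : ℕ, |v t j| + |w t j| ≤ M)
    -- differential inequalities for j ≥ 1
    (hsub : ∀ t > (0 : ℝ), ∀ j : ℕ, 1 ≤ j →
      v' t j ≤ Nfun μ θ p q (v t (j - 1)) (v t j) (v t (j + 1)))
    (hsup : ∀ t > (0 : ℝ), ∀ j : ℕ, 1 ≤ j →
      Nfun μ θ p q (w t (j - 1)) (w t j) (w t (j + 1)) ≤ w' t j)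
    -- boundary ordering
    (hbdry : ∀ t ∈ Set.Ici (0 : ℝ), v t 0 ≤ w t 0)
    -- initial ordering
    (hinit : ∀ j : ℕ, 1 ≤ j → v 0 j ≤ w 0 j) :
    ∀ t > (0 : ℝ), ∀ j : ℕ, 1 ≤ j → v t j ≤ w t j := by
  intro t₁ ht₁ j₁ hj₁
  set K : ℝ := 4 * μ + 2 + μ ^ 2 * (M + 2) + 1 with hKdef
  have hKpos : 0 < K := by positivity
  -- abbreviations
  set z : ℕ → ℝ → ℝ := fun j t => v t j - w t j with hzdef
  -- continuity facts
  have hzcont : ∀ j : ℕ, ContinuousOn (z j) (Set.Ici (0:ℝ)) := by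
    intro j
    exact (fun t ht => ((hv j t ht).sub (hw j t ht)).continuousWithinAt)
  -- z bounded by M
  have hzM : ∀ t ∈ Set.Ici (0:ℝ), ∀ j, z j t ≤ M := by
    intro t ht j
    have := hbound t ht j
    have h1 := le_abs_self (v t j)
    have h2 := neg_abs_le (w t j)
    simp only [hzdef]
    linarith
  -- main claim
  have key : ∀ ε > (0:ℝ), ∀ j : ℕ, ∀ t ∈ Set.Icc (0:ℝ) t₁,
      z j t ≤ ε * Real.exp (K * t) * (1 + (j:ℝ)) := by
    intro ε hε
    set g : ℕ → ℝ → ℝ := fun j t => ε * Real.exp (K * t) * (1 + (j:ℝ)) with hgdef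
    have hgpos : ∀ j t, 0 < g j t := by
      intro j t
      have : (0:ℝ) < 1 + (j:ℝ) := by positivity
      simp only [hgdef]
      positivity
    have hgcont : ∀ j : ℕ, Continuous (g j) := by
      intro j
      exact (continuous_const.mul (Real.continuous_exp.comp
        (continuous_const.mul continuous_id))).mul continuous_const
    set J : ℕ := ⌈M / ε⌉₊ with hJdef
    -- large j never cross
    have hbig : ∀ j : ℕ, J < j → ∀ t ∈ Set.Icc (0:ℝ) t₁, z j t < g j t := by
      intro j hJj t ht
      have h1 : M / ε ≤ (J:ℝ) := Nat.le_ceil _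
      have h2 : (J:ℝ) < (j:ℝ) := by exact_mod_cast hJj
      have h3 : M < ε * (j:ℝ) := by
        rw [div_le_iff₀ hε] at h1
        nlinarith
      have h4 : (1:ℝ) ≤ Real.exp (K * t) := by
        rw [show (1:ℝ) = Real.exp 0 by simp]
        apply Real.exp_le_exp.2
        have := ht.1
        positivity
      have h5 : z j t ≤ M := hzM t ht.1 j
      have h6 : ε * (j:ℝ) ≤ g j t := by
        simp only [hgdef]
        nlinarith [Nat.cast_nonneg (α := ℝ) j]
      linarith
    -- j = 0 never crosses
    have hzero : ∀ t ∈ Set.Icc (0:ℝ) t₁, z 0 t < g 0 t := by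
      intro t ht
      have := hbdry t ht.1
      have := hgpos 0 t
      simp only [hzdef] at *
      linarith
    by_contra hcon
    push_neg at hcon
    obtain ⟨j₂, t₂, ht₂, hlt₂⟩ := hcon
    -- the bad set
    set bad : Set ℝ := {t | t ∈ Set.Icc (0:ℝ) t₁ ∧ ∃ j, j ≤ J ∧ g j t ≤ z j t} with hbaddef
    have hbadne : bad.Nonempty := by
      refine ⟨t₂, ht₂, j₂, ?_, hlt₂.le⟩
      by_contra hJ
      push_neg at hJ
      exact absurd hlt₂ (not_lt.2 (hbig j₂ hJ t₂ ht₂).le)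
    have hbadclosed : IsClosed bad := by
      have : bad = ⋃ j ∈ Finset.range (J+1),
          (Set.Icc (0:ℝ) t₁ ∩ (fun t => z j t - g j t) ⁻¹' Set.Ici 0) := by
        ext t
        simp only [hbaddef, Set.mem_setOf_eq, Set.mem_iUnion, Finset.mem_range,
          Set.mem_inter_iff, Set.mem_preimage, Set.mem_Ici, Nat.lt_succ_iff, sub_nonneg]
        constructor
        · rintro ⟨htmem, j, hjJ, hle⟩; exact ⟨j, hjJ, htmem, hle⟩
        · rintro ⟨j, hjJ, htmem, hle⟩; exact ⟨htmem, j, hjJ, hle⟩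
      rw [this]
      apply isClosed_biUnion_finset
      intro j _
      apply ContinuousOn.preimage_isClosed_of_isClosed
      · exact ((hzcont j).mono (fun x hx => hx.1)).sub (hgcont j).continuousOn
      · exact isClosed_Icc
      · exact isClosed_Ici
    have hbdd : BddBelow bad := ⟨0, fun t ht => ht.1.1⟩
    set t₀ : ℝ := sInf bad with ht₀def
    have ht₀bad : t₀ ∈ bad := hbadclosed.csInf_mem hbadne hbdd
    have ht₀mem : t₀ ∈ Set.Icc (0:ℝ) t₁ := ht₀bad.1
    obtain ⟨j₀, hj₀J, hj₀⟩ := ht₀bad.2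
    -- before t₀ everything is below g
    have hbefore : ∀ t ∈ Set.Ico (0:ℝ) t₀, ∀ j, z j t ≤ g j t := by
      intro t ht j
      rcases le_or_gt j J with hjJ | hjJ
      · by_contra hgt
        push_neg at hgt
        have htbad : t ∈ bad := ⟨⟨ht.1, le_trans ht.2.le ht₀mem.2⟩, j, hjJ, hgt.le⟩
        exact absurd (csInf_le hbdd htbad) (not_le.2 ht.2)
      · exact (hbig j hjJ t ⟨ht.1, le_trans ht.2.le ht₀mem.2⟩).le
    -- t₀ is positive
    have ht₀pos : 0 < t₀ := by
      rcases eq_or_lt_of_le ht₀mem.1 with h0 | h0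
      · exfalso
        have h1 : z j₀ 0 ≤ 0 := by
          rcases Nat.eq_zero_or_pos j₀ with hj | hj
          · subst hj
            have := hbdry 0 (Set.mem_Ici.2 le_rfl)
            simp only [hzdef]; linarith
          · have := hinit j₀ hj
            simp only [hzdef]; linarith
        have h2 := hgpos j₀ 0
        rw [← h0] at hj₀
        linarith
      · exact h0
    -- at t₀ everything is ≤ g
    have hatt0 : ∀ j, z j t₀ ≤ g j t₀ := by
      intro j
      rcases le_or_gt j J with hjJ | hjJ
      · have hne : (𝓝[Set.Ico (0:ℝ) t₀] t₀).NeBot := right_nhdsWithin_Ico_neBot ht₀pos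
        have hcz : ContinuousWithinAt (fun t => z j t - g j t) (Set.Ico 0 t₀) t₀ := by
          apply ContinuousWithinAt.sub
          · exact ((hzcont j t₀ ht₀mem.1).mono (fun x hx => hx.1))
          · exact (hgcont j).continuousAt.continuousWithinAt
        have hev : ∀ᶠ t in 𝓝[Set.Ico (0:ℝ) t₀] t₀, z j t - g j t ≤ 0 := by
          filter_upwards [self_mem_nhdsWithin] with t ht
          linarith [hbefore t ht j]
        have h0 : z j t₀ - g j t₀ ≤ 0 := le_of_tendsto hcz hev
        linarith
      · exact (hbig j hjJ t₀ ht₀mem).le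
    have heq : z j₀ t₀ = g j₀ t₀ := le_antisymm (hatt0 j₀) hj₀
    have hj₀1 : 1 ≤ j₀ := by
      by_contra hj
      push_neg at hj
      interval_cases j₀
      exact absurd hj₀ (not_le.2 (hzero t₀ ht₀mem))
    -- derivative at the crossing
    have hexpderiv : HasDerivAt (fun t => ε * Real.exp (K * t) * (1 + (j₀:ℝ)))
        (ε * (Real.exp (K * t₀) * K) * (1 + (j₀:ℝ))) t₀ := by
      have h1 : HasDerivAt (fun t : ℝ => K * t) K t₀ := by
        simpa using (hasDerivAt_id t₀).const_mul K
      have h2 := h1.exp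
      exact (h2.const_mul ε).mul_const _
    have hIccsub : Set.Icc (0:ℝ) t₀ ⊆ Set.Ici (0:ℝ) := fun x hx => hx.1
    have hd : HasDerivWithinAt (fun t => z j₀ t - g j₀ t)
        ((v' t₀ j₀ - w' t₀ j₀) - ε * (Real.exp (K * t₀) * K) * (1 + (j₀:ℝ)))
        (Set.Icc 0 t₀) t₀ := by
      apply HasDerivWithinAt.sub
      · exact (((hv j₀ t₀ ht₀mem.1).sub (hw j₀ t₀ ht₀mem.1)).mono hIccsub)
      · exact hexpderiv.hasDerivWithinAt
    have hmax : ∀ t ∈ Set.Icc (0:ℝ) t₀, z j₀ t - g j₀ t ≤ z j₀ t₀ - g j₀ t₀ := by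
      intro t ht
      have h0 : z j₀ t₀ - g j₀ t₀ = 0 := by rw [heq]; ring
      rw [h0]
      rcases lt_or_eq_of_le ht.2 with h | h
      · linarith [hbefore t ⟨ht.1, h⟩ j₀]
      · rw [h]; linarith [h0.le]
    have hd0 := deriv_nonneg_of_max ht₀pos hd hmax
    -- differential inequality at t₀
    have hvle := hsub t₀ ht₀pos j₀ hj₀1
    have hwge := hsup t₀ ht₀pos j₀ hj₀1
    set e : ℝ := Real.exp (K * t₀) with hedef
    have hepos : 0 < e := Real.exp_pos _
    have he1 : 1 ≤ e := by
      rw [hedef, show (1:ℝ) = Real.exp 0 by simp]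
      apply Real.exp_le_exp.2
      positivity
    -- bounds for Nfun_diff_le
    have hwM : |w t₀ (j₀ - 1)| ≤ M := by
      have := hbound t₀ ht₀mem.1 (j₀ - 1)
      linarith [abs_nonneg (v t₀ (j₀ - 1))]
    have hcast : ((j₀ - 1 : ℕ) : ℝ) = (j₀:ℝ) - 1 := by
      rw [Nat.cast_sub hj₀1]; simp
    have hA : v t₀ (j₀ - 1) - w t₀ (j₀ - 1) ≤ ε * e * (j₀:ℝ) := by
      have := hatt0 (j₀ - 1)
      simp only [hzdef, hgdef, hcast] at this ⊢
      calc v t₀ (j₀ - 1) - w t₀ (j₀ - 1) ≤ ε * e * (1 + ((j₀:ℝ) - 1)) := by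
            rw [hedef]; convert this using 2
        _ = ε * e * (j₀:ℝ) := by ring
    have hB : |v t₀ j₀ - w t₀ j₀| ≤ ε * e * (1 + (j₀:ℝ)) := by
      have h1 : z j₀ t₀ = ε * e * (1 + (j₀:ℝ)) := heq
      have h2 : 0 ≤ ε * e * (1 + (j₀:ℝ)) := by positivity
      simp only [hzdef] at h1
      rw [h1, abs_of_nonneg h2]
    have hC : v t₀ (j₀ + 1) - w t₀ (j₀ + 1) ≤ ε * e * (2 + (j₀:ℝ)) := by
      have := hatt0 (j₀ + 1)
      simp only [hzdef, hgdef] at this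
      push_cast at this
      calc v t₀ (j₀ + 1) - w t₀ (j₀ + 1) ≤ ε * e * (1 + ((j₀:ℝ) + 1)) := by
            rw [hedef]; convert this using 2
        _ = ε * e * (2 + (j₀:ℝ)) := by ring
    have hj₀nn : (0:ℝ) ≤ (j₀:ℝ) := Nat.cast_nonneg _
    have hNdiff := Nfun_diff_le (θ := θ) hμ hp hq0 hpq hwM
      (mul_nonneg (mul_nonneg hε.le hepos.le) hj₀nn)
      (by positivity) (by positivity) hA hB hC
    -- combine
    have hchain : ε * (e * K) * (1 + (j₀:ℝ)) ≤ v' t₀ j₀ - w' t₀ j₀ := by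
      linarith only [hd0]
    have hchain2 : v' t₀ j₀ - w' t₀ j₀ ≤
        2 * μ * (ε * e * (j₀:ℝ)) + (2 + μ ^ 2 * (M + 2)) * (ε * e * (1 + (j₀:ℝ)))
          + μ * (ε * e * (2 + (j₀:ℝ))) := by linarith only [hvle, hwge, hNdiff]
    have hfactor : 2 * μ * (ε * e * (j₀:ℝ)) + (2 + μ ^ 2 * (M + 2)) * (ε * e * (1 + (j₀:ℝ)))
        + μ * (ε * e * (2 + (j₀:ℝ))) ≤ (K - 1) * (ε * e * (1 + (j₀:ℝ))) := by
      have h1 : 0 < ε * e := by positivity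
      have hKd : K - 1 = 4 * μ + 2 + μ ^ 2 * (M + 2) := by rw [hKdef]; ring
      rw [hKd]
      nlinarith [mul_pos h1 (by positivity : (0:ℝ) < 1 + (j₀:ℝ)), mul_nonneg h1.le hj₀nn,
        mul_nonneg (mul_nonneg h1.le hμ.le) hj₀nn, mul_nonneg h1.le hμ.le]
    have hpos : 0 < ε * e * (1 + (j₀:ℝ)) := by positivity
    linarith only [hchain, hchain2, hfactor, hpos]
  -- pass to the limit ε → 0
  set c : ℝ := Real.exp (K * t₁) * (1 + (j₁:ℝ)) with hcdef
  have hcpos : 0 < c := by positivity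
  by_contra hcon
  push_neg at hcon
  set r : ℝ := v t₁ j₁ - w t₁ j₁ with hrdef
  have hrpos : 0 < r := by simp only [hrdef]; linarith
  have hεpos : 0 < r / (2 * c) := by positivity
  have := key (r / (2 * c)) hεpos j₁ t₁ ⟨le_of_lt ht₁, le_refl t₁⟩
  have heqr : r / (2 * c) * Real.exp (K * t₁) * (1 + (j₁:ℝ)) = r / 2 := by
    rw [hcdef] at *
    field_simp
  simp only [hzdef] at this
  rw [heqr] at this
  linarith
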